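/- Let 1 < p < 2 ≤ q, let V ⊆ ℝ^N be open, let a ∈ C¹(V) be bounded and nonnegative, and set A(x, ξ) = p|ξ|^{p−2}ξ + q a(x)|ξ|^{q−2}ξ for x ∈ V and ξ ∈ ℝ^N (with A(x,0) = 0). Let v₁, v₂ ∈ C¹(V) be such that |∇v₁| ≠ 0 on the whole of V or |∇v₂| ≠ 0 on the whole of V. Then for every compact set K ⊆ V there exists a constant c₂ > 0 such that, for all x ∈ K, ⟨A(x, ∇v₂(x)) − A(x, ∇v₁(x)), ∇v₂(x) − ∇v₁(x)⟩ ≥ c₂ |∇v₂(x) − ∇v₁(x)|². -/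

import Mathlib

open MeasureTheory Set

/-- The double-phase vector field
`A(x, ξ) = p|ξ|^{p-2}ξ + q a(x)|ξ|^{q-2}ξ` (with `A(x,0) = 0`). -/
noncomputable def doublePhaseField (N : ℕ) (p q : ℝ)
    (a : EuclideanSpace ℝ (Fin N) → ℝ) (x ξ : EuclideanSpace ℝ (Fin N)) :
    EuclideanSpace ℝ (Fin N) :=
  (p * ‖ξ‖ ^ (p - 2) + q * a x * ‖ξ‖ ^ (q - 2)) • ξ

private lemma rpow_mul_self_aux (r s : ℝ) (hr : r + 1 ≠ 0) (hs : 0 ≤ s) :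
    s ^ r * s = s ^ (r + 1) := by
  rcases hs.eq_or_lt with h | h
  · rw [← h, Real.zero_rpow hr, mul_zero]
  · rw [Real.rpow_add_one h.ne']

/-- Bernoulli-type bound: for `1 < p < 2`, `0 ≤ s, t ≤ M`, `1 ≤ M`,
`(p-1) M^(p-2) (s-t)^2 ≤ (s-t)(s^(p-1) - t^(p-1))`. -/
private lemma bern_aux {p M : ℝ} (hp : 1 < p) (hp2 : p < 2) (hM : 1 ≤ M) :
    ∀ s t : ℝ, 0 ≤ s → 0 ≤ t → s ≤ M → t ≤ M →
      (p - 1) * M ^ (p - 2) * (s - t) ^ 2 ≤ (s - t) * (s ^ (p - 1) - t ^ (p - 1)) := by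
  have key : ∀ s t : ℝ, 0 ≤ s → 0 ≤ t → s ≤ M → t ≤ M → t ≤ s →
      (p - 1) * M ^ (p - 2) * (s - t) ^ 2 ≤ (s - t) * (s ^ (p - 1) - t ^ (p - 1)) := by
    intro s t hs ht hsM htM hts
    rcases hs.eq_or_lt with h | h
    · have ht0 : t = 0 := le_antisymm (by linarith) ht
      simp [← h, ht0]
    · -- s > 0
      have h1 : t ^ (p - 1) ≤ s ^ (p - 1) - (p - 1) * s ^ (p - 2) * (s - t) := by
        have hx : (-1 : ℝ) ≤ t / s - 1 := by
          have : 0 ≤ t / s := div_nonneg ht h.le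
          linarith
        have hb := rpow_one_add_le_one_add_mul_self hx (by linarith : (0:ℝ) ≤ p - 1)
          (by linarith : p - 1 ≤ 1)
        -- hb : (1 + (t/s - 1)) ^ (p-1) ≤ 1 + (p-1)*(t/s - 1)
        have h1s : (1 : ℝ) + (t / s - 1) = t / s := by ring
        rw [h1s] at hb
        have hsp : (0:ℝ) < s ^ (p - 1) := Real.rpow_pos_of_pos h _
        have hb2 := mul_le_mul_of_nonneg_left hb hsp.le
        have hdiv : s ^ (p - 1) * (t / s) ^ (p - 1) = t ^ (p - 1) := by
          rw [← Real.mul_rpow h.le (div_nonneg ht h.le)]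
          rw [mul_div_cancel₀ _ h.ne']
        rw [hdiv] at hb2
        have hps : s ^ (p - 1) = s ^ (p - 2) * s := by
          rw [show p - 1 = (p - 2) + 1 by ring, Real.rpow_add_one h.ne']
        have hss : s ^ (p - 1) * (t / s) = s ^ (p - 2) * t := by
          rw [hps]; field_simp
        calc t ^ (p - 1) ≤ s ^ (p - 1) * (1 + (p - 1) * (t / s - 1)) := hb2
          _ = s ^ (p - 1) + (p - 1) * (s ^ (p - 1) * (t / s) - s ^ (p - 1)) := by ring
          _ = s ^ (p - 1) - (p - 1) * s ^ (p - 2) * (s - t) := by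
              rw [hss, hps]; ring
      have h2 : M ^ (p - 2) ≤ s ^ (p - 2) :=
        Real.rpow_le_rpow_of_nonpos h hsM (by linarith)
      have h3 : (p - 1) * M ^ (p - 2) * (s - t) ≤ (p - 1) * s ^ (p - 2) * (s - t) := by
        apply mul_le_mul_of_nonneg_right _ (by linarith)
        apply mul_le_mul_of_nonneg_left h2 (by linarith)
      have h4 : (p - 1) * s ^ (p - 2) * (s - t) ≤ s ^ (p - 1) - t ^ (p - 1) := by linarith
      calc (p - 1) * M ^ (p - 2) * (s - t) ^ 2
          = ((p - 1) * M ^ (p - 2) * (s - t)) * (s - t) := by ring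
        _ ≤ (s ^ (p - 1) - t ^ (p - 1)) * (s - t) := by
            apply mul_le_mul_of_nonneg_right _ (by linarith)
            linarith
        _ = (s - t) * (s ^ (p - 1) - t ^ (p - 1)) := by ring
  intro s t hs ht hsM htM
  rcases le_total t s with h | h
  · exact key s t hs ht hsM htM h
  · have := key t s ht hs htM hsM h
    nlinarith [this]

/-- The `p`-part scalar estimate. -/
private lemma plem_aux {p M s t u : ℝ} (hp : 1 < p) (hp2 : p < 2) (hM : 1 ≤ M)
    (hs : 0 ≤ s) (ht : 0 ≤ t) (hsM : s ≤ M) (htM : t ≤ M)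
    (hpos : 0 < s ∨ 0 < t) (hu : u ≤ s * t) :
    (p - 1) / 2 * M ^ (p - 2) * (s ^ 2 + t ^ 2 - 2 * u) ≤
      s ^ (p - 2) * s ^ 2 + t ^ (p - 2) * t ^ 2 - (s ^ (p - 2) + t ^ (p - 2)) * u := by
  have hMp : (0 : ℝ) < M ^ (p - 2) := Real.rpow_pos_of_pos (by linarith) _
  have hsnn : (0 : ℝ) ≤ s ^ (p - 2) := Real.rpow_nonneg hs _
  have htnn : (0 : ℝ) ≤ t ^ (p - 2) := Real.rpow_nonneg ht _
  have hsum : M ^ (p - 2) ≤ s ^ (p - 2) + t ^ (p - 2) := by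
    rcases hpos with h | h
    · have := Real.rpow_le_rpow_of_nonpos h hsM (by linarith : p - 2 ≤ 0)
      linarith
    · have := Real.rpow_le_rpow_of_nonpos h htM (by linarith : p - 2 ≤ 0)
      linarith
  have hber := bern_aux hp hp2 hM s t hs ht hsM htM
  have hfs : s ^ (p - 2) * s = s ^ (p - 1) := by
    rw [show p - 1 = p - 2 + 1 by ring]
    exact rpow_mul_self_aux (p - 2) s (by intro hc; apply (by linarith : p ≠ 1); linarith) hs
  have hft : t ^ (p - 2) * t = t ^ (p - 1) := by
    rw [show p - 1 = p - 2 + 1 by ring]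
    exact rpow_mul_self_aux (p - 2) t (by intro hc; apply (by linarith : p ≠ 1); linarith) ht
  -- slope nonnegativity term
  have hslope : 0 ≤ (s * t - u) * ((s ^ (p - 2) + t ^ (p - 2)) - (p - 1) * M ^ (p - 2)) := by
    apply mul_nonneg (by linarith)
    nlinarith [hMp, hsum]
  -- rewrite fs*s^2 etc. in the goal: fs*s^2 = s^(p-1)*s
  have h1 : s ^ (p - 2) * s ^ 2 = s ^ (p - 1) * s := by rw [← hfs]; ring
  have h2 : t ^ (p - 2) * t ^ 2 = t ^ (p - 1) * t := by rw [← hft]; ring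
  rw [h1, h2]
  have hA : s ^ (p - 2) * s * t = s ^ (p - 1) * t := by rw [hfs]
  have hB : t ^ (p - 2) * t * s = t ^ (p - 1) * s := by rw [hft]
  have h5 : 0 ≤ (p - 1) * M ^ (p - 2) * (s - t) ^ 2 :=
    mul_nonneg (mul_nonneg (by linarith) hMp.le) (sq_nonneg _)
  nlinarith [hber, hslope, hA, hB, h5]

/-- The `q`-part scalar estimate (monotonicity, `q ≥ 2`). -/
private lemma qlem_aux {q s t u : ℝ} (hq : 2 ≤ q)
    (hs : 0 ≤ s) (ht : 0 ≤ t) (hu : u ≤ s * t) :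
    0 ≤ s ^ (q - 2) * s ^ 2 + t ^ (q - 2) * t ^ 2 - (s ^ (q - 2) + t ^ (q - 2)) * u := by
  have hsnn : (0 : ℝ) ≤ s ^ (q - 2) := Real.rpow_nonneg hs _
  have htnn : (0 : ℝ) ≤ t ^ (q - 2) := Real.rpow_nonneg ht _
  have hgs : s ^ (q - 2) * s = s ^ (q - 1) := by
    rw [show q - 1 = q - 2 + 1 by ring]
    exact rpow_mul_self_aux (q - 2) s (by intro hc; nlinarith) hs
  have hgt : t ^ (q - 2) * t = t ^ (q - 1) := by
    rw [show q - 1 = q - 2 + 1 by ring]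
    exact rpow_mul_self_aux (q - 2) t (by intro hc; nlinarith) ht
  have hmono : 0 ≤ (s - t) * (s ^ (q - 1) - t ^ (q - 1)) := by
    rcases le_total t s with h | h
    · have := Real.rpow_le_rpow ht h (by linarith : (0:ℝ) ≤ q - 1)
      apply mul_nonneg (by linarith) (by linarith)
    · have := Real.rpow_le_rpow hs h (by linarith : (0:ℝ) ≤ q - 1)
      nlinarith [this]
  have hslope : 0 ≤ (s * t - u) * (s ^ (q - 2) + t ^ (q - 2)) :=
    mul_nonneg (by linarith) (by linarith)
  have hA : s ^ (q - 2) * s * t = s ^ (q - 1) * t := by rw [hgs]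
  have hB : t ^ (q - 2) * t * s = t ^ (q - 1) * s := by rw [hgt]
  have h1 : s ^ (q - 2) * s ^ 2 = s ^ (q - 1) * s := by rw [← hgs]; ring
  have h2 : t ^ (q - 2) * t ^ 2 = t ^ (q - 1) * t := by rw [← hgt]; ring
  rw [h1, h2]
  nlinarith [hmono, hslope, hA, hB]


private lemma pointwise_aux {N : ℕ} {p q M α : ℝ} (hp : 1 < p) (hp2 : p < 2) (hq : 2 ≤ q)
    (hM : 1 ≤ M) (hα : 0 ≤ α) (ξ η : EuclideanSpace ℝ (Fin N))
    (hξ : ‖ξ‖ ≤ M) (hη : ‖η‖ ≤ M) (hne : ξ ≠ 0 ∨ η ≠ 0) :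
    p * ((p - 1) / 2 * M ^ (p - 2)) * ‖ξ - η‖ ^ (2 : ℕ) ≤
      (inner ℝ ((p * ‖ξ‖ ^ (p - 2) + q * α * ‖ξ‖ ^ (q - 2)) • ξ
          - (p * ‖η‖ ^ (p - 2) + q * α * ‖η‖ ^ (q - 2)) • η) (ξ - η) : ℝ) := by
  set s := ‖ξ‖ with hsdef
  set t := ‖η‖ with htdef
  set u : ℝ := inner ℝ ξ η with hudef
  have hs : 0 ≤ s := norm_nonneg _
  have ht : 0 ≤ t := norm_nonneg _
  have hu : u ≤ s * t := real_inner_le_norm ξ η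
  have hpos : 0 < s ∨ 0 < t := by
    rcases hne with h | h
    · exact Or.inl (norm_pos_iff.mpr h)
    · exact Or.inr (norm_pos_iff.mpr h)
  have hexp : (inner ℝ ((p * s ^ (p - 2) + q * α * s ^ (q - 2)) • ξ
      - (p * t ^ (p - 2) + q * α * t ^ (q - 2)) • η) (ξ - η) : ℝ)
      = (p * s ^ (p - 2) + q * α * s ^ (q - 2)) * s ^ 2
        + (p * t ^ (p - 2) + q * α * t ^ (q - 2)) * t ^ 2
        - ((p * s ^ (p - 2) + q * α * s ^ (q - 2))
            + (p * t ^ (p - 2) + q * α * t ^ (q - 2))) * u := by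
    simp only [inner_sub_left, inner_sub_right, real_inner_smul_left,
      real_inner_self_eq_norm_sq, ← hsdef, ← htdef, ← hudef]
    rw [show (inner ℝ η ξ : ℝ) = u by rw [real_inner_comm]]
    ring
  have hnorm : ‖ξ - η‖ ^ (2 : ℕ) = s ^ 2 + t ^ 2 - 2 * u := by
    rw [norm_sub_sq_real]; ring
  rw [hexp, hnorm]
  have hP := plem_aux hp hp2 hM hs ht hξ hη hpos hu
  have hQ := qlem_aux hq hs ht hu
  have hP' := mul_le_mul_of_nonneg_left hP (by linarith : (0:ℝ) ≤ p)
  have hQ' := mul_nonneg (mul_nonneg (by linarith : (0:ℝ) ≤ q) hα) hQ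
  nlinarith [hP', hQ']

/-- Let `1 < p < 2 ≤ q`, let `V ⊆ ℝ^N` be open, let `a ∈ C¹(V)` be bounded and nonnegative,
and let `A(x, ξ) = p|ξ|^{p-2}ξ + q a(x)|ξ|^{q-2}ξ`. Let `v₁, v₂ ∈ C¹(V)` be such that
`|∇v₁| ≠ 0` on the whole of `V` or `|∇v₂| ≠ 0` on the whole of `V`. Then for every compact
`K ⊆ V` there is `c₂ > 0` such that, for all `x ∈ K`,
`⟨A(x, ∇v₂(x)) − A(x, ∇v₁(x)), ∇v₂(x) − ∇v₁(x)⟩ ≥ c₂ |∇v₂(x) − ∇v₁(x)|²`. -/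
theorem doublePhaseField_monotonicity_estimate (N : ℕ) (p q : ℝ)
    (hp : 1 < p) (hp2 : p < 2) (hq : 2 ≤ q)
    (V : Set (EuclideanSpace ℝ (Fin N))) (hVopen : IsOpen V)
    (a : EuclideanSpace ℝ (Fin N) → ℝ)
    (ha : ContDiffOn ℝ 1 a V)
    (habd : ∃ M : ℝ, ∀ x ∈ V, |a x| ≤ M)
    (hann : ∀ x ∈ V, 0 ≤ a x)
    (v₁ v₂ : EuclideanSpace ℝ (Fin N) → ℝ)
    (hv₁ : ContDiffOn ℝ 1 v₁ V) (hv₂ : ContDiffOn ℝ 1 v₂ V)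
    (hgrad : (∀ x ∈ V, gradient v₁ x ≠ 0) ∨ (∀ x ∈ V, gradient v₂ x ≠ 0))
    (K : Set (EuclideanSpace ℝ (Fin N))) (hK : IsCompact K) (hKV : K ⊆ V) :
    ∃ c₂ > (0 : ℝ), ∀ x ∈ K,
      c₂ * ‖gradient v₂ x - gradient v₁ x‖ ^ (2 : ℕ) ≤
        (inner ℝ (doublePhaseField N p q a x (gradient v₂ x)
            - doublePhaseField N p q a x (gradient v₁ x))
          (gradient v₂ x - gradient v₁ x) : ℝ) := by
  have hgc : ∀ v : EuclideanSpace ℝ (Fin N) → ℝ, ContDiffOn ℝ 1 v V →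
      ContinuousOn (gradient v) V := by
    intro v hv
    have h1 : ContinuousOn (fderiv ℝ v) V :=
      hv.continuousOn_fderiv_of_isOpen hVopen le_rfl
    exact (InnerProductSpace.toDual ℝ
      (EuclideanSpace ℝ (Fin N))).symm.continuous.comp_continuousOn h1
  obtain ⟨C₁, hC₁⟩ := hK.exists_bound_of_continuousOn ((hgc v₁ hv₁).mono hKV)
  obtain ⟨C₂, hC₂⟩ := hK.exists_bound_of_continuousOn ((hgc v₂ hv₂).mono hKV)
  set M : ℝ := max 1 (max C₁ C₂) with hMdef
  have hM : 1 ≤ M := le_max_left _ _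
  have hMp : (0:ℝ) < M ^ (p - 2) := Real.rpow_pos_of_pos (by linarith) _
  refine ⟨p * ((p - 1) / 2 * M ^ (p - 2)),
    mul_pos (by linarith) (mul_pos (by linarith) hMp), ?_⟩
  intro x hx
  have hxV : x ∈ V := hKV hx
  have hξM : ‖gradient v₂ x‖ ≤ M :=
    (hC₂ x hx).trans ((le_max_right C₁ C₂).trans (le_max_right _ _))
  have hηM : ‖gradient v₁ x‖ ≤ M :=
    (hC₁ x hx).trans ((le_max_left C₁ C₂).trans (le_max_right _ _))
  have hne : gradient v₂ x ≠ 0 ∨ gradient v₁ x ≠ 0 := by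
    rcases hgrad with h | h
    · exact Or.inr (h x hxV)
    · exact Or.inl (h x hxV)
  have := pointwise_aux (α := a x) hp hp2 hq hM (hann x hxV)
    (gradient v₂ x) (gradient v₁ x) hξM hηM hne
  simpa [doublePhaseField] using this
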